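/- For strictly increasing positive integer lists l=(l_1,...,l_m) with m ≥ 2 and q=(q_1,...,q_n), the polynomial P_{l,q}(x) of the paper satisfies P_{l,q}(0) = P_{l^{(m)},q}(l_m - l_{m-1} - 1), where l^{(m)} denotes l with its last entry removed. -/

import Mathlib

/-- The rising factorial `(a)_j = a(a+1)···(a+j-1)`. -/
noncomputable def rfac {K : Type*} [Field K] (a : K) (j : ℕ) : K :=
  ∏ i ∈ Finset.range j, (a + i)

/-- The product `(x+2)(x+3)^2···(x+n-1)^2(x+n)`, whose bases grow by one from
factor to factor while the exponents increase by one up to the middle and then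
decrease by one (empty for `n ≤ 1`). -/
noncomputable def tentInt {K : Type*} [Field K] (x : K) (n : ℕ) : K :=
  ∏ j ∈ Finset.Icc 2 n, (x + j) ^ (min (j - 1) (n + 1 - j))

/-- The product `(x+3/2)(x+5/2)^2···(x+(2n-1)/2)^2(x+(2n+1)/2)`, bases growing by
one, exponents rising by one to the middle and then falling (empty for `n = 0`). -/
noncomputable def tentHalf {K : Type*} [Field K] (x : K) (n : ℕ) : K :=
  ∏ j ∈ Finset.Icc 1 n, (x + j + 1 / 2) ^ (min j (n + 1 - j))

/-- The product `(x+1)(x+2)^2···(x+m-1)^2(x+m)`, bases growing by one, exponents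
rising by one to the middle and then falling (empty for `m = 0`). -/
noncomputable def tentIntBar {K : Type*} [Field K] (x : K) (m : ℕ) : K :=
  ∏ j ∈ Finset.Icc 1 m, (x + j) ^ (min j (m + 1 - j))

/-- The product `(x+3/2)(x+5/2)^2···(x+(2m-3)/2)^2(x+(2m-1)/2)`, bases growing by
one, exponents rising by one to the middle and then falling (empty for `m ≤ 1`). -/
noncomputable def tentHalfBar {K : Type*} [Field K] (x : K) (m : ℕ) : K :=
  ∏ j ∈ Finset.Icc 1 (m - 1), (x + j + 1 / 2) ^ (min j (m - j))

/-- The polynomial `B_{m,n}(x)` of formula (1.1). -/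
noncomputable def Bpoly {K : Type*} [Field K] (m n : ℕ) (x : K) : K :=
  ((2 : K) ^ (m * n + m * (m - 1) / 2))⁻¹ *
    rfac (x + n + 1) m * rfac (x + n + 2) m *
    tentInt x n * tentHalf x n *
    (∏ i ∈ Finset.Icc 1 n, rfac (x + i) m / rfac (x + i + 1 / 2) m) *
    (∏ i ∈ Finset.Icc 1 m, rfac (2 * x + n + i + 2) (n + i - 1))

/-- The polynomial `B̄_{m,n}(x)` of formula (1.2). -/
noncomputable def Bbar {K : Type*} [Field K] (m n : ℕ) (x : K) : K :=
  ((2 : K) ^ (m * n + n * (n + 1) / 2))⁻¹ *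
    rfac (x + m + 1) n *
    tentIntBar x m * tentHalfBar x m *
    (∏ i ∈ Finset.Icc 1 m, rfac (x + i) n / rfac (x + i + 1 / 2) n) *
    (∏ i ∈ Finset.Icc 1 n, rfac (2 * x + m + i + 1) (m + i))

/-- The constant `c_{l,q}` of formula (1.3):
`c_{l,q} = 2^{C(n-m,2)-m} ∏_{i=1}^m 1/(2l_i)! ∏_{i=1}^n 1/(2q_i-1)!
  · ∏_{i<j}(l_j-l_i) ∏_{i<j}(q_j-q_i) / ∏_{i,j}(l_i+q_j)`,
where `C(a,2) = a(a-1)/2` for any integer `a`. -/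
noncomputable def cConst (l q : ℕ → ℕ) (m n : ℕ) : ℚ :=
  (2 : ℚ) ^ ((((n : ℤ) - m) * ((n : ℤ) - m - 1)) / 2 - m) *
    (∏ i ∈ Finset.Icc 1 m, ((Nat.factorial (2 * l i) : ℚ))⁻¹) *
    (∏ i ∈ Finset.Icc 1 n, ((Nat.factorial (2 * q i - 1) : ℚ))⁻¹) *
    ((∏ i ∈ Finset.Icc 1 m, ∏ j ∈ Finset.Icc (i + 1) m, ((l j : ℚ) - l i)) *
      (∏ i ∈ Finset.Icc 1 n, ∏ j ∈ Finset.Icc (i + 1) n, ((q j : ℚ) - q i))) /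
    (∏ i ∈ Finset.Icc 1 m, ∏ j ∈ Finset.Icc 1 n, ((l i : ℚ) + q j))

/-- The polynomial `P_{l,q}(x)` in the form of formula (5.1):
`P_{l,q}(x) = c_{l,q} · B_{m,n}(x+l_m-m)
  · ∏_{i=1}^m ∏_{j=i}^{l_i-1} (x+l_m-j)(x+l_m-m+n+j+2)
  · ∏_{i=1}^n ∏_{j=i}^{q_i-1} (x+l_m-m+n-j+1)(x+l_m+j+1)`. -/
noncomputable def Ppoly (l q : ℕ → ℕ) (m n : ℕ) (x : ℚ) : ℚ :=
  cConst l q m n * Bpoly m n (x + l m - m) *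
    (∏ i ∈ Finset.Icc 1 m, ∏ j ∈ Finset.Icc i (l i - 1),
      (x + l m - j) * (x + l m - m + n + j + 2)) *
    (∏ i ∈ Finset.Icc 1 n, ∏ j ∈ Finset.Icc i (q i - 1),
      (x + l m - m + n - j + 1) * (x + l m + j + 1))


open Finset

lemma rfac_zero (a : ℚ) : rfac a 0 = 1 := by simp [rfac]

lemma rfac_succ (a : ℚ) (k : ℕ) : rfac a (k+1) = rfac a k * (a + k) := by
  simp [rfac, Finset.prod_range_succ]

lemma rfac_succ' (a : ℚ) (k : ℕ) : rfac a (k+1) = a * rfac (a+1) k := by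
  rw [rfac, Finset.prod_range_succ']
  simp only [Nat.cast_zero, add_zero]
  rw [mul_comm, rfac]
  congr 1
  refine Finset.prod_congr rfl fun i _ => ?_
  push_cast; ring

lemma rfac_add (a : ℚ) (p q : ℕ) : rfac a (p+q) = rfac a p * rfac (a + p) q := by
  simp only [rfac, Finset.prod_range_add]
  congr 1
  refine Finset.prod_congr rfl fun i _ => ?_
  push_cast; ring

lemma rfac_pos (a : ℚ) (h : 0 < a) (k : ℕ) : 0 < rfac a k := by
  refine Finset.prod_pos fun i _ => ?_
  positivity

lemma rfac_factorial (k : ℕ) : rfac 1 k = (Nat.factorial k : ℚ) := by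
  induction k with
  | zero => simp [rfac_zero, Nat.factorial]
  | succ k ih => rw [rfac_succ, ih, Nat.factorial_succ]; push_cast; ring

lemma rfac_double (a : ℚ) (k : ℕ) :
    rfac (a + 1/2) k * rfac (a + 1) k * 2^(2*k) = rfac (2*a + 1) (2*k) := by
  induction k with
  | zero => simp [rfac_zero]
  | succ k ih =>
    have h2 : 2*(k+1) = (2*k+1)+1 := by ring
    rw [h2, rfac_succ, rfac_succ, rfac_succ, rfac_succ,
      show (2:ℚ)^(2*k+1+1) = 2^(2*k)*2^2 by rw [← pow_add]]
    push_cast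
    linear_combination ((2*a+1+2*(k:ℚ))*(2*a+2+2*(k:ℚ))) * ih

-- ∏_{j ∈ Icc a b} (c + j) = rfac (c+a) (b+1-a)
lemma prod_Icc_cast_add (c : ℚ) (a b : ℕ) :
    ∏ j ∈ Icc a b, (c + (j:ℚ)) = rfac (c + a) (b + 1 - a) := by
  rw [← Finset.Ico_add_one_right_eq_Icc, Finset.prod_Ico_eq_prod_range, rfac]
  refine Finset.prod_congr rfl fun i _ => ?_
  push_cast; ring

-- ∏_{j ∈ Icc a b} (c - j) = rfac (c - b) (b+1-a) when a ≤ b + 1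
lemma prod_Icc_cast_sub (c : ℚ) (a b : ℕ) (h : a ≤ b + 1) :
    ∏ j ∈ Icc a b, (c - (j:ℚ)) = rfac (c - b) (b + 1 - a) := by
  rw [← Finset.Ico_add_one_right_eq_Icc, Finset.prod_Ico_eq_prod_range, rfac]
  rw [← Finset.prod_range_reflect]
  refine Finset.prod_congr rfl fun i hi => ?_
  rw [Finset.mem_range] at hi
  have h1 : a + (b + 1 - a - 1 - i) = b - i := by omega
  rw [h1]
  have h2 : ((b - i : ℕ) : ℚ) = (b : ℚ) - i := by
    have : i ≤ b := by omega
    push_cast [this]; ring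
  rw [h2]; ring

lemma rfac_merge (X Y : ℕ) (C : ℚ) (h : C = 1 + X) : rfac 1 X * rfac C Y = rfac 1 (X + Y) := by
  rw [rfac_add, h]

lemma rfac_step (X : ℕ) (C : ℚ) (h : C = 1 + X) : rfac 1 X * C = rfac 1 (X+1) := by
  rw [rfac_succ, h]

lemma rfac_shift (c : ℚ) (k : ℕ) (hc : c ≠ 0) :
    rfac (c+1) k = rfac c k * (c + k) * c⁻¹ := by
  have h := rfac_succ' c k
  rw [rfac_succ] at h
  field_simp
  linarith [h]

lemma star_identity (M t n : ℕ) :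
    ((M:ℚ)+t+1+n) * ((M:ℚ)+t+1+n+1) * rfac ((M:ℚ)+t+1) n *
      rfac ((M:ℚ)+t+1+n+t+2) (n+M) * rfac 1 t * rfac ((M:ℚ)+t+1+n+2) t *
      rfac ((t:ℚ)+1) M
    = 2^(2*n) * rfac 1 (2*M+2*t+2) * rfac ((M:ℚ)+t+1+1/2) n * rfac ((M:ℚ)+t+1+1) n := by
  have h1 : rfac 1 t * rfac ((t:ℚ)+1) M = rfac 1 (t+M) :=
    rfac_merge t M _ (by push_cast; ring)
  have h2 : rfac 1 (t+M) * rfac ((M:ℚ)+t+1) n = rfac 1 (t+M+n) :=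
    rfac_merge _ n _ (by push_cast; ring)
  have h3 : rfac 1 (t+M+n) * ((M:ℚ)+t+1+n) = rfac 1 (t+M+n+1) :=
    rfac_step _ _ (by push_cast; ring)
  have h4 : rfac 1 (t+M+n+1) * ((M:ℚ)+t+1+n+1) = rfac 1 (t+M+n+2) :=
    rfac_step _ _ (by push_cast; ring)
  have h5 : rfac 1 (t+M+n+2) * rfac ((M:ℚ)+t+1+n+2) t = rfac 1 (t+M+n+2+t) :=
    rfac_merge _ t _ (by push_cast; ring)
  have h6 : rfac 1 (t+M+n+2+t) * rfac ((M:ℚ)+t+1+n+t+2) (n+M) = rfac 1 (t+M+n+2+t+(n+M)) :=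
    rfac_merge _ _ _ (by push_cast; ring)
  have hd : rfac ((M:ℚ)+t+1+1/2) n * rfac ((M:ℚ)+t+1+1) n * 2^(2*n)
      = rfac (2*((M:ℚ)+t+1) + 1) (2*n) := rfac_double _ n
  have h7 : rfac 1 (2*M+2*t+2) * rfac (2*((M:ℚ)+t+1)+1) (2*n) = rfac 1 (2*M+2*t+2+2*n) :=
    rfac_merge _ _ _ (by push_cast; ring)
  have he : t+M+n+2+t+(n+M) = 2*M+2*t+2+2*n := by ring
  calc ((M:ℚ)+t+1+n) * ((M:ℚ)+t+1+n+1) * rfac ((M:ℚ)+t+1) n *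
      rfac ((M:ℚ)+t+1+n+t+2) (n+M) * rfac 1 t * rfac ((M:ℚ)+t+1+n+2) t *
      rfac ((t:ℚ)+1) M
      = rfac 1 (t+M+n+2+t) * rfac ((M:ℚ)+t+1+n+t+2) (n+M) := by
        rw [← h5, ← h4, ← h3, ← h2, ← h1]; ring
    _ = rfac 1 (2*M+2*t+2+2*n) := by rw [h6, he]
    _ = 2^(2*n) * rfac 1 (2*M+2*t+2) * rfac ((M:ℚ)+t+1+1/2) n * rfac ((M:ℚ)+t+1+1) n := by
        rw [← h7, ← hd]; ring

lemma nat_half_shift (M n : ℕ) :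
    (M+1)*n + (M+1)*(M+1-1)/2 = (M*n + M*(M-1)/2) + (n+M) := by
  have h0 : (M+1)*n = M*n + n := by ring
  have h1 : (M+1)*(M+1-1) = M*(M-1) + 2*M := by
    cases M with
    | zero => simp
    | succ s => simp only [Nat.add_sub_cancel]; ring
  have h2 : Even (M*(M-1)) := by
    rcases Nat.even_or_odd M with h | h
    · exact h.mul_right _
    · exact (Nat.Odd.sub_odd h odd_one).mul_left _
  obtain ⟨k, hk⟩ := h2
  omega

lemma Bpoly_ratio (M n : ℕ) (x : ℚ) :
    Bpoly (M+1) n x = Bpoly M n x *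
      (((2:ℚ)^(n+M))⁻¹ * (x+n+1+M) * (x+n+2+M) *
      (∏ i ∈ Icc 1 n, (x+i+M)/(x+i+1/2+M)) * rfac (2*x+n+M+3) (n+M)) := by
  unfold Bpoly
  rw [nat_half_shift M n, pow_add, mul_inv]
  rw [rfac_succ (x+↑n+1) M, rfac_succ (x+↑n+2) M]
  have hprod : (∏ i ∈ Icc 1 n, rfac (x + ↑i) (M+1) / rfac (x + ↑i + 1/2) (M+1))
      = (∏ i ∈ Icc 1 n, rfac (x + ↑i) M / rfac (x + ↑i + 1/2) M) *
        (∏ i ∈ Icc 1 n, (x+i+M)/(x+i+1/2+M)) := by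
    rw [← Finset.prod_mul_distrib]
    refine Finset.prod_congr rfl fun i _ => ?_
    rw [rfac_succ, rfac_succ, div_mul_div_comm]
  have hlast : (∏ i ∈ Icc 1 (M+1), rfac (2*x + ↑n + ↑i + 2) (n + i - 1))
      = (∏ i ∈ Icc 1 M, rfac (2*x + ↑n + ↑i + 2) (n + i - 1)) * rfac (2*x+n+M+3) (n+M) := by
    rw [Finset.prod_Icc_succ_top (by omega : 1 ≤ M+1)]
    congr 1
    rw [show n+(M+1)-1 = n+M by omega]
    congr 1
    push_cast; ring
  rw [hprod, hlast]
  ring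

lemma zexp_shift (M n : ℕ) : ((((n:ℤ) - (M+1)) * ((n:ℤ) - (M+1) - 1)) / 2 - (M+1))
    = (((((n:ℤ) - M) * ((n:ℤ) - M - 1))) / 2 - M) + ((M:ℤ) - n) := by
  have h2 : Even (((n:ℤ)-M-1) * ((n:ℤ)-M-1+1)) := Int.even_mul_succ_self _
  obtain ⟨k, hk⟩ := h2
  have h3 : ((n:ℤ)-M) * ((n:ℤ)-M-1) = ((n:ℤ)-M-1) * ((n:ℤ)-M-1+1) := by ring
  have h1 : ((n:ℤ)-(M+1)) * ((n:ℤ)-(M+1)-1)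
      = ((n:ℤ)-M-1) * ((n:ℤ)-M-1+1) - 2*((n:ℤ)-M-1) := by ring
  omega

lemma double_prod_split (f : ℕ → ℕ → ℚ) (M : ℕ) :
    ∏ i ∈ Icc 1 (M+1), ∏ j ∈ Icc (i+1) (M+1), f i j
      = (∏ i ∈ Icc 1 M, ∏ j ∈ Icc (i+1) M, f i j) * ∏ i ∈ Icc 1 M, f i (M+1) := by
  rw [Finset.prod_Icc_succ_top (by omega : 1 ≤ M+1)]
  rw [show Icc (M+1+1) (M+1) = (∅ : Finset ℕ) from Finset.Icc_eq_empty (by omega)]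
  rw [Finset.prod_empty, mul_one, ← Finset.prod_mul_distrib]
  refine Finset.prod_congr rfl fun i hi => ?_
  rw [Finset.mem_Icc] at hi
  exact Finset.prod_Icc_succ_top (by omega) _

lemma cConst_ratio (l q : ℕ → ℕ) (M n : ℕ) :
    cConst l q (M+1) n = cConst l q M n *
      ((2:ℚ)^((M:ℤ)-(n:ℤ)) * ((Nat.factorial (2 * l (M+1)) : ℚ))⁻¹ *
       (∏ i ∈ Icc 1 M, ((l (M+1):ℚ) - l i)) * (∏ j ∈ Icc 1 n, ((l (M+1):ℚ) + q j))⁻¹) := by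
  unfold cConst
  have hz : (2:ℚ)^((((n:ℤ) - (M+1)) * ((n:ℤ) - (M+1) - 1)) / 2 - (M+1))
      = (2:ℚ)^(((((n:ℤ) - M) * ((n:ℤ) - M - 1))) / 2 - M) * (2:ℚ)^((M:ℤ)-(n:ℤ)) := by
    rw [← zpow_add₀ (two_ne_zero), zexp_shift]
  have hcast : ((↑(M+1):ℤ)) = ((M:ℤ)+1) := by push_cast; ring
  rw [show ((↑(M+1):ℤ)) = ((M:ℤ)+1) from by push_cast; ring] at *
  rw [hz]
  rw [Finset.prod_Icc_succ_top (by omega : 1 ≤ M+1) (fun i => ((Nat.factorial (2 * l i) : ℚ))⁻¹)]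
  rw [double_prod_split (fun i j => ((l j : ℚ) - l i)) M]
  rw [Finset.prod_Icc_succ_top (by omega : 1 ≤ M+1) (fun i => ∏ j ∈ Icc 1 n, ((l i : ℚ) + q j))]
  ring

lemma inner_A_ratio (L V : ℚ) (i s : ℕ) (hi1 : 1 ≤ i) (his : i ≤ s) (hne : L - s ≠ 0) :
    (∏ j ∈ Icc i (s-1), (L - (j:ℚ)) * (V + j))
      = (∏ j ∈ Icc i (s-1), ((L-1) - (j:ℚ)) * (V + j)) * ((L - i) * (L - s)⁻¹) := by
  rw [Finset.prod_mul_distrib, Finset.prod_mul_distrib]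
  rw [prod_Icc_cast_sub L i (s-1) (by omega), prod_Icc_cast_sub (L-1) i (s-1) (by omega)]
  have h1 : L - ((s-1 : ℕ):ℚ) = (L - s) + 1 := by
    have : ((s-1:ℕ):ℚ) = (s:ℚ) - 1 := by push_cast [Nat.cast_sub (by omega : 1 ≤ s)]; ring
    rw [this]; ring
  have h2 : L - 1 - ((s-1 : ℕ):ℚ) = L - s := by
    have : ((s-1:ℕ):ℚ) = (s:ℚ) - 1 := by push_cast [Nat.cast_sub (by omega : 1 ≤ s)]; ring
    rw [this]; ring
  rw [h1, h2, rfac_shift (L - s) _ hne]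
  have h3 : ((s-1)+1-i) = s - i := by omega
  have h4 : (L - (s:ℚ)) + ((s - i : ℕ):ℚ) = L - i := by
    push_cast [Nat.cast_sub his]; ring
  rw [h3, h4]
  ring

lemma inner_C_ratio (L W : ℚ) (i t : ℕ) (hi1 : 1 ≤ i) (hit : i ≤ t) (hne : L + i ≠ 0) :
    (∏ j ∈ Icc i (t-1), (W - (j:ℚ)) * ((L+1) + j))
      = (∏ j ∈ Icc i (t-1), (W - (j:ℚ)) * (L + j)) * ((L + t) * (L + i)⁻¹) := by
  rw [Finset.prod_mul_distrib, Finset.prod_mul_distrib]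
  rw [prod_Icc_cast_add (L+1) i (t-1), prod_Icc_cast_add L i (t-1)]
  rw [show L + 1 + (i:ℚ) = (L + i) + 1 by ring, rfac_shift (L + i) _ hne]
  have h4 : (L + (i:ℚ)) + (((t-1)+1-i : ℕ):ℚ) = L + t := by
    have : ((t-1)+1-i) = t - i := by omega
    rw [this]; push_cast [Nat.cast_sub hit]; ring
  rw [h4]
  ring


lemma final_scalar (M t n : ℕ) :
    rfac (((M+1+t : ℕ):ℚ) - ↑M) M * (rfac (((M+1+t : ℕ):ℚ) + 1) n)⁻¹ *
    ((2:ℚ)^((M:ℤ)-(n:ℤ)) * ((2:ℚ)^(n+M))⁻¹ * ((Nat.factorial (2*(M+1+t)) : ℚ))⁻¹ *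
     ((((M+1+t : ℕ):ℚ) - ↑(M+1))+↑n+1+↑M) * ((((M+1+t : ℕ):ℚ) - ↑(M+1))+↑n+2+↑M) *
     (rfac ((M+1+t : ℕ):ℚ) n / rfac (((M+1+t : ℕ):ℚ)+1/2) n) *
     rfac (2*(((M+1+t : ℕ):ℚ) - ↑(M+1))+↑n+↑M+3) (n+M) *
     rfac 1 ((M+1+t) - (M+1)) * rfac (((M+1+t : ℕ):ℚ)+↑n+2) ((M+1+t) - (M+1))) = 1 := by
  have hsub : (M+1+t) - (M+1) = t := by omega
  rw [hsub]
  have hL : ((M+1+t : ℕ):ℚ) = (M:ℚ)+t+1 := by push_cast; ring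
  rw [hL]
  rw [show ((M:ℚ)+t+1) - (M:ℚ) = (t:ℚ)+1 from by ring]
  rw [show 2*(((M:ℚ)+t+1) - ↑(M+1))+↑n+↑M+3 = (M:ℚ)+t+1+↑n+↑t+2 from by push_cast; ring]
  rw [show (2*(M+1+t)) = 2*M+2*t+2 from by ring, ← rfac_factorial]
  rw [show (2:ℚ)^((M:ℤ)-(n:ℤ)) = 2^M * ((2:ℚ)^n)⁻¹ from by
    rw [zpow_sub₀ two_ne_zero, div_eq_mul_inv, zpow_natCast, zpow_natCast]]
  have hstar := star_identity M t n
  set R0 := rfac ((M:ℚ)+t+1) n with hR0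
  set R1 := rfac ((M:ℚ)+t+1+1/2) n with hR1
  set R2 := rfac ((M:ℚ)+t+1+1) n with hR2
  set R3 := rfac (1:ℚ) (2*M+2*t+2) with hR3
  set R4 := rfac ((t:ℚ)+1) M with hR4
  set R5 := rfac (1:ℚ) t with hR5
  set R6 := rfac ((M:ℚ)+t+1+↑n+2) t with hR6
  set R7 := rfac ((M:ℚ)+t+1+↑n+↑t+2) (n+M) with hR7
  have hr1 : R1 ≠ 0 := by rw [hR1]; exact (rfac_pos _ (by positivity) n).ne'
  have hr2 : R2 ≠ 0 := by rw [hR2]; exact (rfac_pos _ (by positivity) n).ne'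
  have hr3 : R3 ≠ 0 := by rw [hR3]; exact (rfac_pos 1 one_pos _).ne'
  have h2n : ((2:ℚ)^n) ≠ 0 := by positivity
  have h2nM : ((2:ℚ)^(n+M)) ≠ 0 := by positivity
  field_simp
  push_cast
  linear_combination (2:ℚ)^M * hstar

/-- Third equality of Lemma 5.3: for strictly increasing positive lists
`l = (l_1,...,l_m)` with `m ≥ 2` and `q = (q_1,...,q_n)`,
`P_{l,q}(0) = P_{l^{(m)},q}(l_m - l_{m-1} - 1)`. -/
theorem Ppoly_boundary_l (m n : ℕ) (l q : ℕ → ℕ) (hm : 2 ≤ m)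
    (hlpos : ∀ i, 1 ≤ i → i ≤ m → 1 ≤ l i)
    (hlmono : ∀ i, 1 ≤ i → i < m → l i < l (i + 1))
    (hqpos : ∀ i, 1 ≤ i → i ≤ n → 1 ≤ q i)
    (hqmono : ∀ i, 1 ≤ i → i < n → q i < q (i + 1)) :
    Ppoly l q m n 0 = Ppoly l q (m - 1) n ((l m : ℚ) - l (m - 1) - 1) := by
  obtain ⟨M, rfl⟩ : ∃ M, m = M + 1 := ⟨m - 1, by omega⟩
  have hM : 1 ≤ M := by omega
  simp only [Nat.add_sub_cancel]
  -- basic inequalities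
  have hl_ge : ∀ i, 1 ≤ i → i ≤ M + 1 → i ≤ l i := by
    intro i h1 h2
    induction i with
    | zero => omega
    | succ k ih =>
      rcases Nat.eq_or_lt_of_le h1 with h | h
      · have h0 : k = 0 := by omega
        subst h0
        exact hlpos 1 le_rfl h2
      · have hk : 1 ≤ k := by omega
        have h5 := ih hk (by omega)
        have h6 := hlmono k hk (by omega)
        omega
  have hq_ge : ∀ i, 1 ≤ i → i ≤ n → i ≤ q i := by
    intro i h1 h2
    induction i with
    | zero => omega
    | succ k ih =>
      rcases Nat.eq_or_lt_of_le h1 with h | h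
      · have h0 : k = 0 := by omega
        subst h0
        exact hqpos 1 le_rfl h2
      · have hk : 1 ≤ k := by omega
        have h5 := ih hk (by omega)
        have h6 := hqmono k hk (by omega)
        omega
  have hl_lt : ∀ i, 1 ≤ i → i ≤ M → l i < l (M+1) := by
    intro i h1 h2
    have key : ∀ j, i < j → j ≤ M + 1 → l i < l j := by
      intro j
      induction j with
      | zero => omega
      | succ k ih =>
        intro hij hk
        rcases Nat.lt_or_ge i k with h | h
        · exact lt_trans (ih h (by omega)) (hlmono k (by omega) (by omega))
        · have hik : i = k := by omega
          subst hik
          exact hlmono i h1 (by omega)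
    exact key (M+1) (by omega) le_rfl
  have hLpM : M + 1 ≤ l (M+1) := hl_ge (M+1) (by omega) le_rfl
  unfold Ppoly
  simp only [zero_add]
  -- canonicalize
  have e3 : Bpoly M n ((l (M+1) : ℚ) - ↑(l M) - 1 + ↑(l M) - ↑M)
      = Bpoly M n ((l (M+1) : ℚ) - ↑(M+1)) := by
    congr 1; push_cast; ring
  have e1 : (∏ i ∈ Icc 1 (M+1), ∏ j ∈ Icc i (l i - 1),
        ((l (M+1) : ℚ) - ↑j) * ((l (M+1) : ℚ) - ↑(M+1) + ↑n + ↑j + 2))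
      = ∏ i ∈ Icc 1 (M+1), ∏ j ∈ Icc i (l i - 1),
        ((l (M+1) : ℚ) - ↑j) * (((l (M+1) : ℚ) - ↑(M+1) + ↑n + 2) + ↑j) :=
    Finset.prod_congr rfl fun i _ => Finset.prod_congr rfl fun j _ => by ring
  have e2 : (∏ i ∈ Icc 1 n, ∏ j ∈ Icc i (q i - 1),
        ((l (M+1) : ℚ) - ↑(M+1) + ↑n - ↑j + 1) * ((l (M+1) : ℚ) + ↑j + 1))
      = ∏ i ∈ Icc 1 n, ∏ j ∈ Icc i (q i - 1),
        (((l (M+1) : ℚ) - ↑(M+1) + ↑n + 1) - ↑j) * (((l (M+1) : ℚ) + 1) + ↑j) :=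
    Finset.prod_congr rfl fun i _ => Finset.prod_congr rfl fun j _ => by ring
  have e4 : (∏ i ∈ Icc 1 M, ∏ j ∈ Icc i (l i - 1),
        ((l (M+1) : ℚ) - ↑(l M) - 1 + ↑(l M) - ↑j) *
          ((l (M+1) : ℚ) - ↑(l M) - 1 + ↑(l M) - ↑M + ↑n + ↑j + 2))
      = ∏ i ∈ Icc 1 M, ∏ j ∈ Icc i (l i - 1),
        (((l (M+1) : ℚ) - 1) - ↑j) * (((l (M+1) : ℚ) - ↑(M+1) + ↑n + 2) + ↑j) :=
    Finset.prod_congr rfl fun i _ => Finset.prod_congr rfl fun j _ => by push_cast; ring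
  have e5 : (∏ i ∈ Icc 1 n, ∏ j ∈ Icc i (q i - 1),
        ((l (M+1) : ℚ) - ↑(l M) - 1 + ↑(l M) - ↑M + ↑n - ↑j + 1) *
          ((l (M+1) : ℚ) - ↑(l M) - 1 + ↑(l M) + ↑j + 1))
      = ∏ i ∈ Icc 1 n, ∏ j ∈ Icc i (q i - 1),
        (((l (M+1) : ℚ) - ↑(M+1) + ↑n + 1) - ↑j) * ((l (M+1) : ℚ) + ↑j) :=
    Finset.prod_congr rfl fun i _ => Finset.prod_congr rfl fun j _ => by push_cast; ring
  rw [e1, e2, e3, e4, e5]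
  have hL0 : (0:ℚ) < (l (M+1) : ℚ) := by exact_mod_cast (show 0 < l (M+1) by omega)
  have hA : (∏ i ∈ Icc 1 (M+1), ∏ j ∈ Icc i (l i - 1),
        ((l (M+1):ℚ) - ↑j) * (((l (M+1):ℚ) - ↑(M+1) + ↑n + 2) + ↑j))
      = (∏ i ∈ Icc 1 M, ∏ j ∈ Icc i (l i - 1),
          (((l (M+1):ℚ) - 1) - ↑j) * (((l (M+1):ℚ) - ↑(M+1) + ↑n + 2) + ↑j))
        * (rfac 1 (l (M+1) - (M+1)) * rfac ((l (M+1):ℚ) + ↑n + 2) (l (M+1) - (M+1))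
           * ∏ i ∈ Icc 1 M, (((l (M+1):ℚ) - ↑i) * ((l (M+1):ℚ) - ↑(l i))⁻¹)) := by
    rw [Finset.prod_Icc_succ_top (by omega : 1 ≤ M+1)]
    have htop : (∏ j ∈ Icc (M+1) (l (M+1) - 1),
          ((l (M+1):ℚ) - ↑j) * (((l (M+1):ℚ) - ↑(M+1) + ↑n + 2) + ↑j))
        = rfac 1 (l (M+1) - (M+1)) * rfac ((l (M+1):ℚ) + ↑n + 2) (l (M+1) - (M+1)) := by
      rw [Finset.prod_mul_distrib]
      rw [prod_Icc_cast_sub _ (M+1) (l (M+1) - 1) (by omega),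
          prod_Icc_cast_add _ (M+1) (l (M+1) - 1)]
      congr 1
      · congr 1
        · push_cast [Nat.cast_sub (show 1 ≤ l (M+1) by omega)]; ring
        · omega
      · congr 1
        · push_cast; ring
        · omega
    have hmid : (∏ i ∈ Icc 1 M, ∏ j ∈ Icc i (l i - 1),
          ((l (M+1):ℚ) - ↑j) * (((l (M+1):ℚ) - ↑(M+1) + ↑n + 2) + ↑j))
        = ∏ i ∈ Icc 1 M, ((∏ j ∈ Icc i (l i - 1),
            (((l (M+1):ℚ) - 1) - ↑j) * (((l (M+1):ℚ) - ↑(M+1) + ↑n + 2) + ↑j))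
            * (((l (M+1):ℚ) - ↑i) * ((l (M+1):ℚ) - ↑(l i))⁻¹)) := by
      refine Finset.prod_congr rfl fun i hi => ?_
      rw [Finset.mem_Icc] at hi
      refine inner_A_ratio _ _ i (l i) hi.1 (hl_ge i hi.1 (by omega)) ?_
      have hlt : ((l i : ℚ)) < (l (M+1) : ℚ) := by
        exact_mod_cast hl_lt i hi.1 hi.2
      have : (0:ℚ) < (l (M+1):ℚ) - l i := by linarith
      exact this.ne'
    rw [htop, hmid, Finset.prod_mul_distrib]
    ring
  have hC : (∏ i ∈ Icc 1 n, ∏ j ∈ Icc i (q i - 1),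
        (((l (M+1):ℚ) - ↑(M+1) + ↑n + 1) - ↑j) * (((l (M+1):ℚ) + 1) + ↑j))
      = (∏ i ∈ Icc 1 n, ∏ j ∈ Icc i (q i - 1),
          (((l (M+1):ℚ) - ↑(M+1) + ↑n + 1) - ↑j) * ((l (M+1):ℚ) + ↑j))
        * ∏ i ∈ Icc 1 n, (((l (M+1):ℚ) + ↑(q i)) * ((l (M+1):ℚ) + ↑i)⁻¹) := by
    rw [← Finset.prod_mul_distrib]
    refine Finset.prod_congr rfl fun i hi => ?_
    rw [Finset.mem_Icc] at hi
    refine inner_C_ratio _ _ i (q i) hi.1 (hq_ge i hi.1 hi.2) ?_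
    have : (0:ℚ) ≤ (i:ℚ) := Nat.cast_nonneg i
    have h0 : (0:ℚ) < (l (M+1):ℚ) + i := by linarith
    exact h0.ne'
  rw [hA, hC, cConst_ratio l q M n, Bpoly_ratio M n ((l (M+1):ℚ) - ↑(M+1))]
  have hfinal :
      ((2:ℚ)^((M:ℤ)-(n:ℤ)) * ((Nat.factorial (2 * l (M+1)) : ℚ))⁻¹ *
        (∏ i ∈ Icc 1 M, ((l (M+1):ℚ) - l i)) * (∏ j ∈ Icc 1 n, ((l (M+1):ℚ) + q j))⁻¹) *
      (((2:ℚ)^(n+M))⁻¹ * (((l (M+1):ℚ) - ↑(M+1))+↑n+1+↑M) * (((l (M+1):ℚ) - ↑(M+1))+↑n+2+↑M) *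
        (∏ i ∈ Icc 1 n, (((l (M+1):ℚ) - ↑(M+1))+↑i+↑M)/(((l (M+1):ℚ) - ↑(M+1))+↑i+1/2+↑M)) *
        rfac (2*((l (M+1):ℚ) - ↑(M+1))+↑n+↑M+3) (n+M)) *
      (rfac 1 (l (M+1) - (M+1)) * rfac ((l (M+1):ℚ) + ↑n + 2) (l (M+1) - (M+1))
         * ∏ i ∈ Icc 1 M, (((l (M+1):ℚ) - ↑i) * ((l (M+1):ℚ) - ↑(l i))⁻¹)) *
      (∏ i ∈ Icc 1 n, (((l (M+1):ℚ) + ↑(q i)) * ((l (M+1):ℚ) + ↑i)⁻¹)) = 1 := by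
    obtain ⟨t, ht⟩ : ∃ t, l (M+1) = M + 1 + t := ⟨l (M+1) - (M+1), by omega⟩
    have hl1 : (∏ i ∈ Icc 1 M, ((l (M+1):ℚ) - l i)) *
        (∏ i ∈ Icc 1 M, (((l (M+1):ℚ) - ↑i) * ((l (M+1):ℚ) - ↑(l i))⁻¹))
        = rfac ((l (M+1):ℚ) - ↑M) M := by
      rw [← Finset.prod_mul_distrib]
      have hcg : ∀ i ∈ Icc 1 M, ((l (M+1):ℚ) - l i) *
          (((l (M+1):ℚ) - ↑i) * ((l (M+1):ℚ) - ↑(l i))⁻¹) = (l (M+1):ℚ) - ↑i := by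
        intro i hi
        rw [Finset.mem_Icc] at hi
        have hlt : ((l i:ℚ)) < l (M+1) := by exact_mod_cast hl_lt i hi.1 hi.2
        have hne : ((l (M+1):ℚ) - l i) ≠ 0 := by
          have : (0:ℚ) < (l (M+1):ℚ) - l i := by linarith
          exact this.ne'
        field_simp
      rw [Finset.prod_congr rfl hcg, prod_Icc_cast_sub _ 1 M (by omega),
        show M+1-1 = M from by omega]
    have hq1 : (∏ j ∈ Icc 1 n, ((l (M+1):ℚ) + q j))⁻¹ *
        (∏ i ∈ Icc 1 n, (((l (M+1):ℚ) + ↑(q i)) * ((l (M+1):ℚ) + ↑i)⁻¹))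
        = (rfac ((l (M+1):ℚ) + 1) n)⁻¹ := by
      rw [Finset.prod_mul_distrib, Finset.prod_inv_distrib]
      have hQ : (∏ j ∈ Icc 1 n, ((l (M+1):ℚ) + q j)) ≠ 0 := by
        refine (Finset.prod_pos fun j _ => ?_).ne'
        have : (0:ℚ) ≤ (q j:ℚ) := Nat.cast_nonneg _
        linarith
      rw [← mul_assoc, inv_mul_cancel₀ hQ, one_mul,
        prod_Icc_cast_add _ 1 n, show n+1-1 = n from by omega]
      norm_num
    have hb1 : (∏ i ∈ Icc 1 n,
          (((l (M+1):ℚ) - ↑(M+1))+↑i+↑M)/(((l (M+1):ℚ) - ↑(M+1))+↑i+1/2+↑M))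
        = rfac ((l (M+1):ℚ)) n / rfac ((l (M+1):ℚ)+1/2) n := by
      rw [Finset.prod_div_distrib]
      congr 1
      · rw [show (∏ i ∈ Icc 1 n, (((l (M+1):ℚ) - ↑(M+1))+↑i+↑M))
            = ∏ i ∈ Icc 1 n, (((l (M+1):ℚ) - 1) + ↑i) from
          Finset.prod_congr rfl fun i _ => by push_cast; ring]
        rw [prod_Icc_cast_add _ 1 n, show n+1-1 = n from by omega]
        norm_num
      · rw [show (∏ i ∈ Icc 1 n, (((l (M+1):ℚ) - ↑(M+1))+↑i+1/2+↑M))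
            = ∏ i ∈ Icc 1 n, (((l (M+1):ℚ) - 1/2) + ↑i) from
          Finset.prod_congr rfl fun i _ => by push_cast; ring]
        rw [prod_Icc_cast_add _ 1 n, show n+1-1 = n from by omega]
        congr 1
        push_cast
        ring
    calc ((2:ℚ)^((M:ℤ)-(n:ℤ)) * ((Nat.factorial (2 * l (M+1)) : ℚ))⁻¹ *
        (∏ i ∈ Icc 1 M, ((l (M+1):ℚ) - l i)) * (∏ j ∈ Icc 1 n, ((l (M+1):ℚ) + q j))⁻¹) *
      (((2:ℚ)^(n+M))⁻¹ * (((l (M+1):ℚ) - ↑(M+1))+↑n+1+↑M) * (((l (M+1):ℚ) - ↑(M+1))+↑n+2+↑M) *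
        (∏ i ∈ Icc 1 n, (((l (M+1):ℚ) - ↑(M+1))+↑i+↑M)/(((l (M+1):ℚ) - ↑(M+1))+↑i+1/2+↑M)) *
        rfac (2*((l (M+1):ℚ) - ↑(M+1))+↑n+↑M+3) (n+M)) *
      (rfac 1 (l (M+1) - (M+1)) * rfac ((l (M+1):ℚ) + ↑n + 2) (l (M+1) - (M+1))
         * ∏ i ∈ Icc 1 M, (((l (M+1):ℚ) - ↑i) * ((l (M+1):ℚ) - ↑(l i))⁻¹)) *
      (∏ i ∈ Icc 1 n, (((l (M+1):ℚ) + ↑(q i)) * ((l (M+1):ℚ) + ↑i)⁻¹))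
        = ((∏ i ∈ Icc 1 M, ((l (M+1):ℚ) - l i)) *
            (∏ i ∈ Icc 1 M, (((l (M+1):ℚ) - ↑i) * ((l (M+1):ℚ) - ↑(l i))⁻¹))) *
          ((∏ j ∈ Icc 1 n, ((l (M+1):ℚ) + q j))⁻¹ *
            (∏ i ∈ Icc 1 n, (((l (M+1):ℚ) + ↑(q i)) * ((l (M+1):ℚ) + ↑i)⁻¹))) *
          ((2:ℚ)^((M:ℤ)-(n:ℤ)) * ((2:ℚ)^(n+M))⁻¹ * ((Nat.factorial (2 * l (M+1)) : ℚ))⁻¹ *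
           (((l (M+1):ℚ) - ↑(M+1))+↑n+1+↑M) * (((l (M+1):ℚ) - ↑(M+1))+↑n+2+↑M) *
           (∏ i ∈ Icc 1 n, (((l (M+1):ℚ) - ↑(M+1))+↑i+↑M)/(((l (M+1):ℚ) - ↑(M+1))+↑i+1/2+↑M)) *
           rfac (2*((l (M+1):ℚ) - ↑(M+1))+↑n+↑M+3) (n+M) *
           rfac 1 (l (M+1) - (M+1)) * rfac ((l (M+1):ℚ) + ↑n + 2) (l (M+1) - (M+1))) := by ring
      _ = rfac ((l (M+1):ℚ) - ↑M) M * (rfac ((l (M+1):ℚ) + 1) n)⁻¹ *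
          ((2:ℚ)^((M:ℤ)-(n:ℤ)) * ((2:ℚ)^(n+M))⁻¹ * ((Nat.factorial (2 * l (M+1)) : ℚ))⁻¹ *
           (((l (M+1):ℚ) - ↑(M+1))+↑n+1+↑M) * (((l (M+1):ℚ) - ↑(M+1))+↑n+2+↑M) *
           (rfac ((l (M+1):ℚ)) n / rfac ((l (M+1):ℚ)+1/2) n) *
           rfac (2*((l (M+1):ℚ) - ↑(M+1))+↑n+↑M+3) (n+M) *
           rfac 1 (l (M+1) - (M+1)) * rfac ((l (M+1):ℚ) + ↑n + 2) (l (M+1) - (M+1))) := by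
          rw [hl1, hq1, hb1]
      _ = 1 := by rw [ht]; exact final_scalar M t n
  linear_combination (cConst l q M n * Bpoly M n ((l (M+1):ℚ) - ↑(M+1)) *
    (∏ i ∈ Icc 1 M, ∏ j ∈ Icc i (l i - 1),
      (((l (M+1):ℚ) - 1) - ↑j) * (((l (M+1):ℚ) - ↑(M+1) + ↑n + 2) + ↑j)) *
    (∏ i ∈ Icc 1 n, ∏ j ∈ Icc i (q i - 1),
      (((l (M+1):ℚ) - ↑(M+1) + ↑n + 1) - ↑j) * ((l (M+1):ℚ) + ↑j))) * hfinal
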